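/- arXiv:2207.01041 — 7 statements merged into one kernel-verified Lean document; each statement's English description precedes it below -/
import Mathlib

section
/- For every integer t ≥ 1 there exists a constant c > 0 (depending only on t) such that for all n ≥ t + 1, the interval hypergraph H_n satisfies χ^t_CF(H_n) ≥ c · log₂ n. (Note that H_n has the Hereditary Linear Delaunay property with parameter 1, so this shows the O(c t² log n) upper bound is tight in n up to constant factors.) -/
/-- A `t`-subset-CF-colouring: every hyperedge `h` with `|h| > t` contains a `t`-element
subset whose colour differs from the colour of every other `t`-element subset of `h`. -/
def IsSubsetCFColouring {α β : Type*} (t : ℕ) (E : Set (Finset α)) (φ : Finset α → β) : Prop :=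
  ∀ h ∈ E, t < h.card → ∃ S : Finset α, S ⊆ h ∧ S.card = t ∧
    ∀ S' : Finset α, S' ⊆ h → S'.card = t → S' ≠ S → φ S' ≠ φ S

/-- The hyperedges of the interval hypergraph `H_n`: all discrete intervals
`{i, i+1, …, j}` with `1 ≤ i ≤ j ≤ n`. -/
def intervalEdges (n : ℕ) : Set (Finset ℕ) :=
  {e | ∃ i j : ℕ, 1 ≤ i ∧ i ≤ j ∧ j ≤ n ∧ e = Finset.Icc i j}

lemma key_chain (t n k : ℕ) (ht : 1 ≤ t) (φ : Finset ℕ → Fin k)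
    (hφ : IsSubsetCFColouring t (intervalEdges n) φ) :
    ∀ m a b, 1 ≤ a → b ≤ n → (t + 2) ^ (m + 1) ≤ b + 1 - a →
      ∃ T : Finset (Finset ℕ), T.card = m + 1 ∧
        (∀ S' ∈ T, S' ⊆ Finset.Icc a b ∧ S'.card = t) ∧
        Set.InjOn φ ↑T := by
  intro m
  induction m with
  | zero =>
    intro a b ha hbn hcard
    have hbase : t + 2 ≤ b + 1 - a := by
      calc t + 2 = (t + 2) ^ 1 := by ring
        _ ≤ b + 1 - a := hcard
    have hab : a ≤ b := by omega
    have hicc : (Finset.Icc a b).card = b + 1 - a := Nat.card_Icc a b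
    obtain ⟨S, hS_sub, hS_card, _⟩ :=
      hφ (Finset.Icc a b) ⟨a, b, ha, hab, hbn, rfl⟩ (by omega)
    refine ⟨{S}, by simp, by simp [hS_sub, hS_card], ?_⟩
    rw [Finset.coe_singleton]
    exact Set.injOn_singleton _ _
  | succ m ih =>
    intro a b ha hbn hcard
    have hpow1 : t + 2 ≤ (t + 2) ^ (m + 1) :=
      Nat.le_self_pow (by omega) _
    have hbase : t + 2 ≤ b + 1 - a := by
      calc t + 2 ≤ (t + 2) ^ (m + 1) := hpow1
        _ ≤ (t + 2) ^ (m + 2) := Nat.pow_le_pow_right (by omega) (by omega)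
        _ ≤ b + 1 - a := hcard
    have hab : a ≤ b := by omega
    have hicc : (Finset.Icc a b).card = b + 1 - a := Nat.card_Icc a b
    obtain ⟨S, hS_sub, hS_card, hS_uniq⟩ :=
      hφ (Finset.Icc a b) ⟨a, b, ha, hab, hbn, rfl⟩ (by omega)
    -- pigeonhole: find a long gap avoiding S
    set s : Finset ℕ := Finset.Icc a b \ S with hs_def
    have hs_card : s.card = (b + 1 - a) - t := by
      rw [hs_def, Finset.card_sdiff_of_subset hS_sub, hicc, hS_card]
    have hmaps : ∀ x ∈ s, (S.filter (· < x)).card ∈ Finset.range (t + 1) := by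
      intro x _
      have : (S.filter (· < x)).card ≤ S.card := Finset.card_le_card (Finset.filter_subset _ _)
      simp [Finset.mem_range]; omega
    have hmul : (Finset.range (t + 1)).card * (t + 2) ^ (m + 1) ≤ s.card := by
      rw [Finset.card_range, hs_card]
      have hexp : (t + 2) ^ (m + 1 + 1) = (t + 1) * (t + 2) ^ (m + 1) + (t + 2) ^ (m + 1) := by
        ring
      omega
    obtain ⟨v, _, hv⟩ := Finset.exists_le_card_fiber_of_mul_le_card_of_maps_to hmaps
      ⟨0, by simp⟩ hmul
    set F : Finset ℕ := {x ∈ s | (S.filter (· < x)).card = v} with hF_def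
    have hFne : F.Nonempty := by
      rw [← Finset.card_pos]
      have : 0 < (t + 2) ^ (m + 1) := Nat.pow_pos (by omega)
      omega
    set x := F.min' hFne with hx_def
    set y := F.max' hFne with hy_def
    have hxF : x ∈ F := F.min'_mem hFne
    have hyF : y ∈ F := F.max'_mem hFne
    have hFs : F ⊆ s := Finset.filter_subset _ _
    have hxs : x ∈ s := hFs hxF
    have hys : y ∈ s := hFs hyF
    have hxIcc : x ∈ Finset.Icc a b := (Finset.mem_sdiff.mp hxs).1
    have hyIcc : y ∈ Finset.Icc a b := (Finset.mem_sdiff.mp hys).1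
    have hxS : x ∉ S := (Finset.mem_sdiff.mp hxs).2
    have hyS : y ∉ S := (Finset.mem_sdiff.mp hys).2
    have hfx : (S.filter (· < x)).card = v := (Finset.mem_filter.mp hxF).2
    have hfy : (S.filter (· < y)).card = v := (Finset.mem_filter.mp hyF).2
    have hxy : x ≤ y := F.min'_le y hyF
    -- the gap Icc x y avoids S
    have hgap : ∀ z ∈ Finset.Icc x y, z ∉ S := by
      intro z hz hzS
      obtain ⟨hxz, hzy⟩ := Finset.mem_Icc.mp hz
      have hxz' : x < z := lt_of_le_of_ne hxz (by rintro rfl; exact hxS hzS)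
      have hzy' : z < y := lt_of_le_of_ne hzy (by rintro rfl; exact hyS hzS)
      have hss : S.filter (· < x) ⊂ S.filter (· < y) := by
        constructor
        · intro w hw
          simp only [Finset.mem_filter] at hw ⊢
          exact ⟨hw.1, lt_of_lt_of_le hw.2 hxy⟩
        · intro hsub
          have hz_mem : z ∈ S.filter (· < y) := Finset.mem_filter.mpr ⟨hzS, hzy'⟩
          have := hsub hz_mem
          simp only [Finset.mem_filter] at this
          omega
      have := Finset.card_lt_card hss
      omega
    -- the gap is long enough
    have hFsubIcc : F ⊆ Finset.Icc x y := by
      intro w hw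
      exact Finset.mem_Icc.mpr ⟨F.min'_le w hw, F.le_max' w hw⟩
    have hgap_card : (t + 2) ^ (m + 1) ≤ y + 1 - x := by
      have h1 : F.card ≤ (Finset.Icc x y).card := Finset.card_le_card hFsubIcc
      rw [Nat.card_Icc] at h1
      omega
    have hx1 : 1 ≤ x := le_trans ha (Finset.mem_Icc.mp hxIcc).1
    have hyn : y ≤ n := le_trans (Finset.mem_Icc.mp hyIcc).2 hbn
    obtain ⟨T', hT'_card, hT'_mem, hT'_inj⟩ := ih x y hx1 hyn hgap_card
    have hIccsub : Finset.Icc x y ⊆ Finset.Icc a b := by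
      intro w hw
      obtain ⟨h1, h2⟩ := Finset.mem_Icc.mp hw
      exact Finset.mem_Icc.mpr ⟨le_trans (Finset.mem_Icc.mp hxIcc).1 h1,
        le_trans h2 (Finset.mem_Icc.mp hyIcc).2⟩
    -- elements of T' are distinct from S and have different colours
    have hT'_ne : ∀ S' ∈ T', S' ≠ S := by
      intro S' hS' hEq
      obtain ⟨hsub, hcardt⟩ := hT'_mem S' hS'
      obtain ⟨e, he⟩ := Finset.card_pos.mp (by omega : 0 < S'.card)
      exact hgap e (hsub he) (hEq ▸ he)
    have hT'_col : ∀ S' ∈ T', φ S' ≠ φ S := by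
      intro S' hS'
      obtain ⟨hsub, hcardt⟩ := hT'_mem S' hS'
      exact hS_uniq S' (hsub.trans hIccsub) hcardt (hT'_ne S' hS')
    have hS_notin : S ∉ T' := fun h => hT'_ne S h rfl
    refine ⟨insert S T', ?_, ?_, ?_⟩
    · rw [Finset.card_insert_of_notMem hS_notin, hT'_card]
    · intro S' hS'
      rcases Finset.mem_insert.mp hS' with h | h
      · exact h ▸ ⟨hS_sub, hS_card⟩
      · exact ⟨(hT'_mem S' h).1.trans hIccsub, (hT'_mem S' h).2⟩
    · intro u hu w hw huw
      rw [Finset.coe_insert, Set.mem_insert_iff] at hu hw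
      rcases hu with rfl | hu <;> rcases hw with rfl | hw
      · rfl
      · exact absurd huw.symm (hT'_col w hw)
      · exact absurd huw (hT'_col u hu)
      · exact hT'_inj hu hw huw

theorem stmt_1 :
    ∀ t : ℕ, 1 ≤ t →
      ∃ c : ℝ, 0 < c ∧
        ∀ n : ℕ, t + 1 ≤ n →
          ∀ (k : ℕ) (φ : Finset ℕ → Fin k),
            IsSubsetCFColouring t (intervalEdges n) φ →
            c * Real.logb 2 n ≤ (k : ℝ) := by
  intro t ht
  have hB : (0:ℝ) < Real.logb 2 (t + 2) := by
    apply Real.logb_pos (by norm_num)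
    have : (1:ℝ) ≤ t := by exact_mod_cast ht
    linarith
  refine ⟨1 / (2 * Real.logb 2 (t + 2)), by positivity, ?_⟩
  intro n hn k φ hφ
  have hk1 : 1 ≤ k := (φ ∅).pos
  set L := Nat.log (t + 2) n with hL_def
  have hLk : L ≤ k := by
    rcases Nat.eq_zero_or_pos L with h0 | hpos
    · omega
    · have hpow : (t + 2) ^ ((L - 1) + 1) ≤ n + 1 - 1 := by
        have : (t + 2) ^ L ≤ n := Nat.pow_log_le_self (t + 2) (by omega)
        have hL1 : (L - 1) + 1 = L := by omega
        rw [hL1]; omega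
      obtain ⟨T, hT_card, _, hT_inj⟩ := key_chain t n k ht φ hφ (L - 1) 1 n
        le_rfl le_rfl hpow
      have himg : (T.image φ).card = T.card := Finset.card_image_of_injOn hT_inj
      have : (T.image φ).card ≤ k := by
        have := Finset.card_le_univ (T.image φ)
        simpa using this
      omega
  -- n < (t+2)^(L+1)
  have hlt : n < (t + 2) ^ (L + 1) := Nat.lt_pow_succ_log_self (by omega) n
  have hreal : Real.logb 2 n ≤ (L + 1 : ℝ) * Real.logb 2 (t + 2) := by
    have h1 : (n : ℝ) ≤ ((t + 2 : ℕ) : ℝ) ^ (L + 1) := by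
      exact_mod_cast hlt.le
    calc Real.logb 2 n ≤ Real.logb 2 (((t + 2 : ℕ) : ℝ) ^ (L + 1)) := by
          apply Real.logb_le_logb_of_le (by norm_num) ?_ h1
          have : (0:ℝ) < t + 1 := by positivity
          have hn' : (t:ℝ) + 1 ≤ n := by exact_mod_cast hn
          linarith
        _ = (L + 1 : ℝ) * Real.logb 2 (t + 2) := by
          rw [Real.logb_pow]; push_cast; ring
  have hL1k : (L + 1 : ℝ) ≤ 2 * k := by
    have : L + 1 ≤ 2 * k := by omega
    exact_mod_cast this
  have hmain : Real.logb 2 n ≤ 2 * k * Real.logb 2 (t + 2) := by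
    nlinarith [hB]
  rw [one_div, ← div_eq_inv_mul, div_le_iff₀ (by positivity)]
  linarith
end

section
/- For every integer t ≥ 2 and every k ∈ ℕ there exists n ∈ ℕ with n ≥ t such that the hypergraph H_n with vertex set V = {1, 2, …, n} and hyperedge set { {1} ∪ s : s a (t+1)-element subset of {2, 3, …, n} } satisfies χ_CF(H_n) = 2 and χ^t_CF(H_n) > k. Consequently, there is no function f such that χ^t_CF(H) ≤ f(χ_CF(H)) for all hypergraphs H. -/
/-- A conflict-free colouring of the vertices: every nonempty hyperedge contains a vertex
whose colour differs from the colours of all other vertices of the hyperedge. -/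
def IsCFColouring {α β : Type*} (E : Set (Finset α)) (φ : α → β) : Prop :=
  ∀ h ∈ E, h.Nonempty → ∃ x ∈ h, ∀ y ∈ h, y ≠ x → φ y ≠ φ x

/-- The hyperedges of the hypergraph `H_n`: all sets `{1} ∪ s` where `s` is a
`(t+1)`-element subset of `{2, 3, …, n}`. -/
def starEdges (t n : ℕ) : Set (Finset ℕ) :=
  {e | ∃ s : Finset ℕ, s ⊆ Finset.Icc 2 n ∧ s.card = t + 1 ∧ e = insert 1 s}


/-- Finite hypergraph Ramsey: for uniformity `r`, `k` colours and target size `m`,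
there is `n` such that any `k`-colouring of the `r`-subsets of any set `V` of at
least `n` naturals admits a monochromatic subset of size at least `m`. -/
lemma ramsey (r : ℕ) : ∀ k m : ℕ, ∃ n : ℕ, ∀ (φ : Finset ℕ → Fin k) (V : Finset ℕ),
    n ≤ V.card → ∃ A ⊆ V, m ≤ A.card ∧ ∃ c : Fin k, ∀ S ⊆ A, S.card = r → φ S = c := by
  induction r with
  | zero =>
    intro k m
    refine ⟨m, fun φ V hV => ?_⟩
    obtain ⟨A, hAV, hA⟩ := Finset.exists_subset_card_eq hV
    refine ⟨A, hAV, hA.ge, φ ∅, fun S _ hS => ?_⟩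
    rw [Finset.card_eq_zero] at hS
    rw [hS]
  | succ r IH =>
    intro k m
    rcases k with _ | k
    · exact ⟨0, fun φ => (φ ∅).elim0⟩
    -- key: min-determined sets
    have key : ∀ j : ℕ, ∃ n : ℕ, ∀ (φ : Finset ℕ → Fin (k + 1)) (V : Finset ℕ),
        n ≤ V.card → ∃ A ⊆ V, A.card = j ∧ ∃ c : ℕ → Fin (k + 1),
          ∀ S ⊆ A, S.card = r + 1 → ∀ x ∈ S, (∀ y ∈ S, x ≤ y) → φ S = c x := by
      intro j
      induction j with
      | zero =>
        refine ⟨0, fun φ V _ => ⟨∅, Finset.empty_subset _, Finset.card_empty, fun _ => φ ∅,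
          fun S hS hScard => ?_⟩⟩
        rw [Finset.subset_empty] at hS
        simp [hS] at hScard
      | succ j hj =>
        obtain ⟨nj, hnj⟩ := hj
        obtain ⟨nR, hnR⟩ := IH (k + 1) nj
        refine ⟨nR + 1, fun φ V hV => ?_⟩
        have hVne : V.Nonempty := Finset.card_pos.mp (by omega)
        set v := V.min' hVne with hv
        have hvV : v ∈ V := V.min'_mem hVne
        have hcard : nR ≤ (V.erase v).card := by
          rw [Finset.card_erase_of_mem hvV]; omega
        obtain ⟨W, hWV, hWcard, cv, hWmono⟩ := hnR (fun S => φ (insert v S)) (V.erase v) hcard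
        obtain ⟨A, hAW, hAcard, c', hA⟩ := hnj φ W hWcard
        have hvA : v ∉ A := fun h => (Finset.mem_erase.mp (hWV (hAW h))).1 rfl
        refine ⟨insert v A, ?_, by rw [Finset.card_insert_of_notMem hvA, hAcard],
          fun x => if x = v then cv else c' x, ?_⟩
        · intro x hx
          rcases Finset.mem_insert.mp hx with h | h
          · exact h ▸ hvV
          · exact Finset.mem_of_mem_erase (hWV (hAW h))
        · intro S hS hScard x hxS hxmin
          by_cases hvS : v ∈ S
          · have hxv : x = v := by
              have h1 : x ≤ v := hxmin v hvS
              rcases Finset.mem_insert.mp (hS hxS) with h | h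
              · exact h
              · exfalso
                have hxV : x ∈ V.erase v := hWV (hAW h)
                have : v ≤ x := V.min'_le x (Finset.mem_of_mem_erase hxV)
                have : x = v := le_antisymm h1 this
                exact (Finset.mem_erase.mp hxV).1 this
            simp only [hxv, if_pos rfl]
            have hSv : S = insert v (S.erase v) := (Finset.insert_erase hvS).symm
            have hsub : S.erase v ⊆ W := by
              intro y hy
              obtain ⟨hy1, hy2⟩ := Finset.mem_erase.mp hy
              rcases Finset.mem_insert.mp (hS hy2) with h | h
              · exact absurd h hy1
              · exact hAW h
            have hc : (S.erase v).card = r := by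
              rw [Finset.card_erase_of_mem hvS, hScard]; omega
            calc φ S = φ (insert v (S.erase v)) := by rw [← hSv]
              _ = cv := hWmono _ hsub hc
          · have hSA : S ⊆ A := fun y hy =>
              (Finset.mem_insert.mp (hS hy)).resolve_left (fun h => hvS (h ▸ hy))
            have hxv : x ≠ v := fun h => hvS (h ▸ hxS)
            simp only [if_neg hxv]
            exact hA S hSA hScard x hxS hxmin
    obtain ⟨nk, hnk⟩ := key ((k + 1) * m)
    refine ⟨nk, fun φ V hV => ?_⟩
    obtain ⟨A, hAV, hAcard, c, hA⟩ := hnk φ V hV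
    have hmaps : ∀ a ∈ A, c a ∈ (Finset.univ : Finset (Fin (k + 1))) :=
      fun a _ => Finset.mem_univ _
    have hle : (Finset.univ : Finset (Fin (k + 1))).card * m ≤ A.card := by
      rw [Finset.card_univ, Fintype.card_fin, hAcard]
    obtain ⟨b, _, hb⟩ := Finset.exists_le_card_fiber_of_mul_le_card_of_maps_to hmaps
      Finset.univ_nonempty hle
    refine ⟨A.filter (fun a => c a = b), fun x hx => hAV (Finset.mem_filter.mp hx).1, hb, b,
      fun S hS hScard => ?_⟩
    have hSne : S.Nonempty := Finset.card_pos.mp (by omega)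
    have hmin : S.min' hSne ∈ S := S.min'_mem hSne
    have := hA S (fun y hy => (Finset.mem_filter.mp (hS hy)).1) hScard (S.min' hSne) hmin
      (fun y hy => S.min'_le y hy)
    rw [this, (Finset.mem_filter.mp (hS hmin)).2]

/-- Deleting the minimum: if `v` is below every element of `r`, filtering
`insert v r` to elements that are not minimal gives back `r`. -/
lemma filter_not_min_insert (v : ℕ) (r : Finset ℕ) (hv : ∀ y ∈ r, v < y) :
    (insert v r).filter (fun x => ∃ y ∈ insert v r, y < x) = r := by
  ext x
  simp only [Finset.mem_filter, Finset.mem_insert]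
  constructor
  · rintro ⟨hx | hx, y, hy, hyx⟩
    · exfalso
      subst hx
      rcases hy with rfl | hy
      · exact lt_irrefl _ hyx
      · exact absurd hyx (not_lt.mpr (hv y hy).le)
    · exact hx
  · intro hx
    exact ⟨Or.inr hx, v, Or.inl rfl, hv x hx⟩

theorem stmt_4 :
    ∀ t : ℕ, 2 ≤ t → ∀ k : ℕ,
      ∃ n : ℕ, t ≤ n ∧
        -- χ_CF(H_n) = 2 : a CF-colouring with 2 colours exists, none with 1 colour
        (∃ φ : ℕ → Fin 2, IsCFColouring (starEdges t n) φ) ∧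
        (∀ φ : ℕ → Fin 1, ¬ IsCFColouring (starEdges t n) φ) ∧
        -- χ^t_CF(H_n) > k : no t-subset-CF-colouring with k colours exists
        (∀ φ : Finset ℕ → Fin k, ¬ IsSubsetCFColouring t (starEdges t n) φ) := by
  intro t ht k
  obtain ⟨N, hN⟩ := ramsey t (k * k) (t + 2)
  refine ⟨N + t + 3, by omega, ?_, ?_, ?_⟩
  · -- 2-colour CF colouring
    refine ⟨fun x => if x = 1 then 0 else 1, ?_⟩
    rintro h ⟨s, hs, hscard, rfl⟩ -
    refine ⟨1, Finset.mem_insert_self 1 s, fun y hy hy1 => ?_⟩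
    simp only [hy1, if_neg, if_pos rfl]
    decide
  · -- no 1-colour CF colouring
    intro φ hCF
    have hs : Finset.Icc 2 (t + 2) ⊆ Finset.Icc 2 (N + t + 3) :=
      Finset.Icc_subset_Icc_right (by omega)
    have hscard : (Finset.Icc 2 (t + 2)).card = t + 1 := by rw [Nat.card_Icc]; omega
    obtain ⟨x, hx, hux⟩ := hCF (insert 1 (Finset.Icc 2 (t + 2))) ⟨_, hs, hscard, rfl⟩
      ⟨1, Finset.mem_insert_self _ _⟩
    have h1 : (1 : ℕ) ∉ Finset.Icc 2 (t + 2) := by simp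
    have hcard : (insert 1 (Finset.Icc 2 (t + 2))).card = t + 2 := by
      rw [Finset.card_insert_of_notMem h1, hscard]
    have hne : ((insert 1 (Finset.Icc 2 (t + 2))).erase x).Nonempty := by
      rw [← Finset.card_pos, Finset.card_erase_of_mem hx, hcard]
      omega
    obtain ⟨y, hy⟩ := hne
    obtain ⟨hyx, hyh⟩ := Finset.mem_erase.mp hy
    exact hux y hyh hyx (Subsingleton.elim _ _)
  · -- no t-subset CF colouring with k colours
    intro φ hCF
    set ψ : Finset ℕ → Fin (k * k) := fun S =>
      finProdFinEquiv (φ S, φ (insert 1 (S.filter (fun x => ∃ y ∈ S, y < x)))) with hψ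
    have hV : N ≤ (Finset.Icc 2 (N + t + 3)).card := by rw [Nat.card_Icc]; omega
    obtain ⟨A, hAV, hAcard, c, hmono⟩ := hN ψ _ hV
    obtain ⟨A', hA'A, hA'card⟩ := Finset.exists_subset_card_eq hAcard
    have hA'ne : A'.Nonempty := by rw [← Finset.card_pos, hA'card]; omega
    set v := A'.min' hA'ne with hv
    have hvA' : v ∈ A' := A'.min'_mem hA'ne
    set s := A'.erase v with hsdef
    have hsA' : s ⊆ A' := Finset.erase_subset _ _
    have hscard : s.card = t + 1 := by
      rw [hsdef, Finset.card_erase_of_mem hvA', hA'card]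
      omega
    have hsV : s ⊆ Finset.Icc 2 (N + t + 3) := hsA'.trans (hA'A.trans hAV)
    have h1s : (1 : ℕ) ∉ s := fun h => by
      have := (Finset.mem_Icc.mp (hsV h)).1; omega
    have hvlt : ∀ y ∈ s, v < y := by
      intro y hy
      obtain ⟨hy1, hy2⟩ := Finset.mem_erase.mp hy
      exact lt_of_le_of_ne (A'.min'_le y hy2) (Ne.symm hy1)
    have hedge : insert 1 s ∈ starEdges t (N + t + 3) := ⟨s, hsV, hscard, rfl⟩
    have hhcard : (insert 1 s).card = t + 2 := by
      rw [Finset.card_insert_of_notMem h1s, hscard]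
    obtain ⟨S, hSh, hScard, huniq⟩ := hCF _ hedge (by omega)
    -- consequences of monochromaticity
    have hφeq : ∀ T1 ⊆ A', ∀ T2 ⊆ A', T1.card = t → T2.card = t →
        φ T1 = φ T2 ∧ φ (insert 1 (T1.filter (fun x => ∃ y ∈ T1, y < x))) =
          φ (insert 1 (T2.filter (fun x => ∃ y ∈ T2, y < x))) := by
      intro T1 hT1 T2 hT2 hc1 hc2
      have e1 := hmono T1 (hT1.trans hA'A) hc1
      have e2 := hmono T2 (hT2.trans hA'A) hc2
      have := finProdFinEquiv.injective (e1.trans e2.symm)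
      exact ⟨congrArg Prod.fst this, congrArg Prod.snd this⟩
    by_cases h1S : (1 : ℕ) ∈ S
    · -- S contains the centre 1
      set r := S.erase 1 with hr
      have hrs : r ⊆ s := by
        intro y hy
        obtain ⟨hy1, hy2⟩ := Finset.mem_erase.mp hy
        exact (Finset.mem_insert.mp (hSh hy2)).resolve_left hy1
      have hrcard : r.card = t - 1 := by
        rw [hr, Finset.card_erase_of_mem h1S, hScard]
      have hrne : r.Nonempty := by rw [← Finset.card_pos, hrcard]; omega
      obtain ⟨c0, hc0⟩ := hrne
      have hnsub : ¬ s ⊆ r := fun h => by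
        have := Finset.card_le_card h; omega
      obtain ⟨a, has, har⟩ := Finset.not_subset.mp hnsub
      set r' := insert a (r.erase c0) with hr'
      have har'e : a ∉ r.erase c0 := fun h => har (Finset.mem_of_mem_erase h)
      have hr'card : r'.card = t - 1 := by
        rw [hr', Finset.card_insert_of_notMem har'e, Finset.card_erase_of_mem hc0, hrcard]
        omega
      have hr's : r' ⊆ s := by
        intro y hy
        rcases Finset.mem_insert.mp hy with rfl | hy
        · exact has
        · exact hrs (Finset.mem_of_mem_erase hy)
      have hvr : v ∉ r := fun h => (Finset.mem_erase.mp (hrs h)).1 rfl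
      have hvr' : v ∉ r' := fun h => (Finset.mem_erase.mp (hr's h)).1 rfl
      have hT1card : (insert v r).card = t := by
        rw [Finset.card_insert_of_notMem hvr, hrcard]; omega
      have hT2card : (insert v r').card = t := by
        rw [Finset.card_insert_of_notMem hvr', hr'card]; omega
      have hT1A' : insert v r ⊆ A' := Finset.insert_subset hvA' (hrs.trans hsA')
      have hT2A' : insert v r' ⊆ A' := Finset.insert_subset hvA' (hr's.trans hsA')
      have heq := (hφeq _ hT1A' _ hT2A' hT1card hT2card).2
      rw [filter_not_min_insert v r (fun y hy => hvlt y (hrs hy)),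
        filter_not_min_insert v r' (fun y hy => hvlt y (hr's hy))] at heq
      have h1r : (1 : ℕ) ∉ r := fun h => h1s (hrs h)
      have h1r' : (1 : ℕ) ∉ r' := fun h => h1s (hr's h)
      have hS'card : (insert 1 r').card = t := by
        rw [Finset.card_insert_of_notMem h1r', hr'card]; omega
      have hS'h : insert 1 r' ⊆ insert 1 s :=
        Finset.insert_subset_insert 1 hr's
      have hSr : S = insert 1 r := (Finset.insert_erase h1S).symm
      have hS'ne : insert 1 r' ≠ S := by
        intro h
        have : r' = r := by
          have := congrArg (fun T => Finset.erase T 1) h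
          simpa [Finset.erase_insert h1r', hr] using this
        exact har (this ▸ Finset.mem_insert_self a _)
      exact huniq (insert 1 r') hS'h hS'card hS'ne (by rw [hSr, heq])
    · -- S avoids the centre
      have hSs : S ⊆ s := fun y hy =>
        (Finset.mem_insert.mp (hSh hy)).resolve_left (fun h => h1S (h ▸ hy))
      have hnsub : ¬ s ⊆ S := fun h => by
        have := Finset.card_le_card h; omega
      obtain ⟨a, has, haS⟩ := Finset.not_subset.mp hnsub
      have hSne : S.Nonempty := by rw [← Finset.card_pos, hScard]; omega
      obtain ⟨b, hb⟩ := hSne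
      have haSe : a ∉ S.erase b := fun h => haS (Finset.mem_of_mem_erase h)
      set S' := insert a (S.erase b) with hS'
      have hS'card : S'.card = t := by
        rw [hS', Finset.card_insert_of_notMem haSe, Finset.card_erase_of_mem hb, hScard]
        omega
      have hS's : S' ⊆ s := by
        intro y hy
        rcases Finset.mem_insert.mp hy with rfl | hy
        · exact has
        · exact hSs (Finset.mem_of_mem_erase hy)
      have hS'h : S' ⊆ insert 1 s := hS's.trans (Finset.subset_insert 1 s)
      have hS'ne : S' ≠ S := fun h => haS (h ▸ Finset.mem_insert_self a _)
      have heq := (hφeq S' (hS's.trans hsA') S (hSs.trans hsA') hS'card hScard).1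
      exact huniq S' hS'h hS'card hS'ne heq
end

section
/- There exists an absolute constant C > 0 such that for all integers t ≥ 1 and k ≥ 1 and every hypergraph H = (V, E) with |V| = n ≥ 2, if for every subset V' ⊆ V the induced sub-hypergraph H[V'] admits a (t+1)-colourful colouring with at most k colours, then H admits a t-UM-colouring with at most C · k · log₂ n colours. -/
/-- A `t`-UM-colouring by linearly ordered colours: in every hyperedge `h` there is a set `S`
of `min |h| t` vertices carrying the largest colours of `h`, each of which appears on exactly
one vertex of `h` (and all other vertices of `h` get strictly smaller colours). -/
def IsTUMColouring {α β : Type*} [LinearOrder β] (t : ℕ) (E : Set (Finset α))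
    (φ : α → β) : Prop :=
  ∀ h ∈ E, ∃ S : Finset α, S ⊆ h ∧ S.card = min h.card t ∧
    (∀ x ∈ S, ∀ y ∈ h, φ y = φ x → y = x) ∧
    (∀ x ∈ S, ∀ y ∈ h, y ∉ S → φ y < φ x)

/-- A `t`-colourful colouring: every hyperedge `h` contains at least `min |h| t` vertices
with pairwise distinct colours. -/
def IsColourfulColouring {α β : Type*} (t : ℕ) (E : Set (Finset α)) (φ : α → β) : Prop :=
  ∀ h ∈ E, ∃ S : Finset α, S ⊆ h ∧ S.card = min h.card t ∧ Set.InjOn φ ↑S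

private lemma key_lemma {α : Type} [DecidableEq α] (t k : ℕ) (ht : 1 ≤ t) (hk : 1 ≤ k)
    (V : Finset α) (E : Set (Finset α))
    (hcol : ∀ V' ⊆ V, ∃ φ : α → Fin k,
      IsColourfulColouring (t + 1) {h' | ∃ h ∈ E, h' = h ∩ V'} φ) :
    ∀ (n : ℕ) (W : Finset α), W.card ≤ n → W ⊆ V →
      ∃ (N : ℕ) (φ : α → ℕ),
        ((N : ℝ) ≤ 1 + k * Real.log W.card) ∧
        (W = ∅ → N = 0) ∧
        (∀ v ∈ W, φ v < N) ∧
        (∀ h ∈ E, ∀ c : ℕ,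
          ((h ∩ W).filter (fun v => c < φ v)).card + 1 ≤ t →
          ((h ∩ W).filter (fun v => φ v = c)).card ≤ 1) := by
  intro n
  induction n with
  | zero =>
    intro W hWn hWV
    have hW : W = ∅ := Finset.card_eq_zero.mp (Nat.le_zero.mp hWn)
    refine ⟨0, fun _ => 0, ?_, fun _ => rfl, ?_, ?_⟩
    · simp [hW]
    · simp [hW]
    · intro h hh c _
      simp [hW]
  | succ n ih =>
    intro W hWn hWV
    by_cases hW : W = ∅
    · refine ⟨0, fun _ => 0, ?_, fun _ => rfl, ?_, ?_⟩
      · simp [hW]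
      · simp [hW]
      · intro h hh c _
        simp [hW]
    have hWne : W.Nonempty := Finset.nonempty_iff_ne_empty.mpr hW
    have hWcpos : 1 ≤ W.card := Finset.card_pos.mpr hWne
    obtain ⟨ψ, hψ⟩ := hcol W hWV
    obtain ⟨b, -, hb⟩ := Finset.exists_max_image (Finset.univ : Finset (Fin k))
      (fun a => (W.filter fun v => ψ v = a).card)
      (Finset.univ_nonempty_iff.mpr (Fin.pos_iff_nonempty.mp (by omega)))
    set A := W.filter (fun v => ψ v = b) with hA
    have hAW : A ⊆ W := Finset.filter_subset _ _
    -- pigeonhole : W.card ≤ k * A.card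
    have hpig : W.card ≤ k * A.card := by
      have h1 : W.card = ∑ a : Fin k, (W.filter fun v => ψ v = a).card :=
        Finset.card_eq_sum_card_fiberwise (fun x _ => Finset.mem_univ _)
      have h2 : ∑ a : Fin k, (W.filter fun v => ψ v = a).card ≤
          (Finset.univ : Finset (Fin k)).card • A.card :=
        Finset.sum_le_card_nsmul _ _ _ (fun a _ => hb a (Finset.mem_univ a))
      simpa [h1, Finset.card_univ, mul_comm] using h2
    have hApos : 0 < A.card := by
      rcases Nat.eq_zero_or_pos A.card with h0 | h0
      · rw [h0, mul_zero] at hpig; omega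
      · exact h0
    have hcard' : (W \ A).card ≤ n := by
      have := Finset.card_sdiff_of_subset hAW
      omega
    obtain ⟨N', φ', hbnd', hzero', hlt', hQ'⟩ :=
      ih (W \ A) hcard' ((Finset.sdiff_subset).trans hWV)
    refine ⟨N' + 1, fun v => if v ∈ A then 0 else φ' v + 1, ?_, fun h => absurd h hW, ?_, ?_⟩
    · -- numeric bound
      by_cases hWA : W \ A = ∅
      · have hN0 : N' = 0 := hzero' hWA
        have hlog : (0:ℝ) ≤ Real.log W.card :=
          Real.log_nonneg (by exact_mod_cast hWcpos)
        have hk0 : (0:ℝ) ≤ k := by positivity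
        rw [hN0]
        push_cast
        nlinarith
      · have hm'pos : 1 ≤ (W \ A).card := Finset.card_pos.mpr
          (Finset.nonempty_iff_ne_empty.mpr hWA)
        have hsub : (W \ A).card = W.card - A.card := Finset.card_sdiff_of_subset hAW
        have hAle : A.card ≤ W.card := Finset.card_le_card hAW
        have h0k : (0:ℝ) < k := by exact_mod_cast hk
        have h0m : (0:ℝ) < W.card := by exact_mod_cast hWcpos
        have h0m' : (0:ℝ) < (W \ A).card := by exact_mod_cast hm'pos
        have hmr : ((W \ A).card : ℝ) = (W.card : ℝ) - A.card := by
          rw [hsub]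
          push_cast [hAle]
          ring
        have hdiv : (W.card : ℝ) / k ≤ (A.card : ℝ) := by
          rw [div_le_iff₀ h0k]
          have : (W.card : ℝ) ≤ k * A.card := by exact_mod_cast hpig
          linarith
        have hm'r : ((W \ A).card : ℝ) ≤ (W.card : ℝ) - (W.card : ℝ) / k := by
          rw [hmr]; linarith
        have hlogle : Real.log (W \ A).card ≤ Real.log W.card - 1 / k := by
          have h1 : Real.log (((W \ A).card : ℝ) / W.card) ≤ ((W \ A).card : ℝ) / W.card - 1 :=
            Real.log_le_sub_one_of_pos (by positivity)
          rw [Real.log_div (ne_of_gt h0m') (ne_of_gt h0m)] at h1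
          have h2 : ((W \ A).card : ℝ) / W.card ≤ 1 - 1 / k := by
            rw [div_le_iff₀ h0m]
            have : (1 - 1 / k) * (W.card : ℝ) = (W.card : ℝ) - (W.card : ℝ) / k := by
              ring
            linarith
          linarith
        have hkk : (k : ℝ) * (1 / k) = 1 := by field_simp
        have h3 : (k : ℝ) * Real.log (W \ A).card ≤ k * Real.log W.card - 1 := by
          have := mul_le_mul_of_nonneg_left hlogle (le_of_lt h0k)
          nlinarith
        push_cast
        linarith
    · -- colour bound
      intro v hv
      by_cases hvA : v ∈ A
      · simp [hvA]
      · have hv' : v ∈ W \ A := Finset.mem_sdiff.mpr ⟨hv, hvA⟩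
        have := hlt' v hv'
        simp [hvA]
        omega
    · -- the invariant
      intro h hh c hc
      match c with
      | 0 =>
        -- the colour 0 class is h ∩ A; use the colourful colouring
        have hfilt1 : (h ∩ W).filter (fun v => 0 < if v ∈ A then 0 else φ' v + 1) =
            (h ∩ W).filter (fun v => v ∉ A) := by
          ext v
          simp only [Finset.mem_filter]
          constructor
          · rintro ⟨hv, hlt⟩
            refine ⟨hv, fun hvA => ?_⟩
            rw [if_pos hvA] at hlt
            omega
          · rintro ⟨hv, hvA⟩
            exact ⟨hv, by rw [if_neg hvA]; omega⟩
        rw [hfilt1] at hc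
        obtain ⟨T, hTsub, hTcard, hTinj⟩ := hψ (h ∩ W) ⟨h, hh, rfl⟩
        have hmemA : ∀ v, v ∈ A → ψ v = b := by
          intro v hv
          rw [hA, Finset.mem_filter] at hv
          exact hv.2
        have hTA : (T.filter (fun v => v ∈ A)).card ≤ 1 := by
          rw [Finset.card_le_one]
          intro x hx y hy
          rw [Finset.mem_filter] at hx hy
          exact hTinj (Finset.mem_coe.mpr hx.1) (Finset.mem_coe.mpr hy.1)
            (by rw [hmemA x hx.2, hmemA y hy.2])
        have hTnA : (T.filter (fun v => v ∉ A)).card ≤ ((h ∩ W).filter (fun v => v ∉ A)).card :=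
          Finset.card_le_card (Finset.filter_subset_filter _ hTsub)
        have hTsplit : (T.filter (fun v => v ∈ A)).card + (T.filter (fun v => v ∉ A)).card
            = T.card := Finset.card_filter_add_card_filter_not _
        have hTt : T.card ≤ t := by omega
        have hhW : (h ∩ W).card ≤ t := by
          rw [hTcard] at hTt
          omega
        have hTeq : T = h ∩ W := Finset.eq_of_subset_of_card_le hTsub (by omega)
        -- now all of h ∩ W has distinct ψ-colours, so at most one vertex is in A
        have hgoal : ((h ∩ W).filter (fun v => (if v ∈ A then 0 else φ' v + 1) = 0)).card ≤ 1 := by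
          rw [Finset.card_le_one]
          intro x hx y hy
          simp only [Finset.mem_filter] at hx hy
          have hxA : x ∈ A := by
            by_contra hxa
            rw [if_neg hxa] at hx
            omega
          have hyA : y ∈ A := by
            by_contra hya
            rw [if_neg hya] at hy
            omega
          exact hTinj (by rw [hTeq]; exact Finset.mem_coe.mpr hx.1)
            (by rw [hTeq]; exact Finset.mem_coe.mpr hy.1)
            (by rw [hmemA x hxA, hmemA y hyA])
        exact hgoal
      | c + 1 =>
        have hfilt2 : (h ∩ W).filter (fun v => (c + 1) < if v ∈ A then 0 else φ' v + 1) =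
            (h ∩ (W \ A)).filter (fun v => c < φ' v) := by
          ext v
          simp only [Finset.mem_filter, Finset.mem_inter, Finset.mem_sdiff]
          constructor
          · rintro ⟨⟨hvh, hvW⟩, hlt⟩
            by_cases hvA : v ∈ A
            · rw [if_pos hvA] at hlt; omega
            · rw [if_neg hvA] at hlt
              exact ⟨⟨hvh, hvW, hvA⟩, by omega⟩
          · rintro ⟨⟨hvh, hvW, hvA⟩, hlt⟩
            exact ⟨⟨hvh, hvW⟩, by rw [if_neg hvA]; omega⟩
        have hfilt3 : (h ∩ W).filter (fun v => (if v ∈ A then 0 else φ' v + 1) = c + 1) =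
            (h ∩ (W \ A)).filter (fun v => φ' v = c) := by
          ext v
          simp only [Finset.mem_filter, Finset.mem_inter, Finset.mem_sdiff]
          constructor
          · rintro ⟨⟨hvh, hvW⟩, heq⟩
            by_cases hvA : v ∈ A
            · rw [if_pos hvA] at heq; omega
            · rw [if_neg hvA] at heq
              exact ⟨⟨hvh, hvW, hvA⟩, by omega⟩
          · rintro ⟨⟨hvh, hvW, hvA⟩, heq⟩
            exact ⟨⟨hvh, hvW⟩, by rw [if_neg hvA]; omega⟩
        rw [hfilt2] at hc
        rw [hfilt3]
        exact hQ' h hh c hc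

theorem stmt_7 :
    ∃ C : ℝ, 0 < C ∧
      ∀ (t k : ℕ), 1 ≤ t → 1 ≤ k →
        ∀ (α : Type) [DecidableEq α], ∀ (V : Finset α) (E : Set (Finset α)),
          (∀ h ∈ E, h ⊆ V) → 2 ≤ V.card →
          (∀ V' ⊆ V, ∃ φ : α → Fin k,
            IsColourfulColouring (t + 1) {h' | ∃ h ∈ E, h' = h ∩ V'} φ) →
          ∃ k' : ℕ, (k' : ℝ) ≤ C * (k : ℝ) * Real.logb 2 V.card ∧
            ∃ φ : α → Fin k', IsTUMColouring t E φ := by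
  refine ⟨2, by norm_num, ?_⟩
  intro t k ht hk α _ V E hEV hV2 hcol
  obtain ⟨N, φ, hN, -, hlt, hQ⟩ := key_lemma t k ht hk V E hcol V.card V le_rfl subset_rfl
  have hVne : V.Nonempty := Finset.card_pos.mp (by omega)
  have hNpos : 0 < N := lt_of_le_of_lt (Nat.zero_le _) (hlt hVne.choose hVne.choose_spec)
  refine ⟨N, ?_, ?_⟩
  · -- numeric bound
    have h2V : (2:ℝ) ≤ V.card := by exact_mod_cast hV2
    have hlog2pos : (0:ℝ) < Real.log 2 := Real.log_pos one_lt_two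
    have hL : 1 ≤ Real.logb 2 V.card := by
      rw [Real.logb, le_div_iff₀ hlog2pos, one_mul]
      exact Real.log_le_log (by norm_num) h2V
    have hlogn : Real.log V.card = Real.logb 2 V.card * Real.log 2 := by
      rw [Real.logb, div_mul_cancel₀ _ (ne_of_gt hlog2pos)]
    have hlog2le : Real.log 2 ≤ 1 := by
      have := Real.log_le_sub_one_of_pos (by norm_num : (0:ℝ) < 2)
      linarith
    have hk1 : (1:ℝ) ≤ k := by exact_mod_cast hk
    have hkL : (1:ℝ) ≤ k * Real.logb 2 V.card := by nlinarith
    nlinarith [hN, mul_nonneg (by linarith : (0:ℝ) ≤ (k:ℝ) * Real.logb 2 V.card)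
      (by linarith : (0:ℝ) ≤ 1 - Real.log 2)]
  · -- the UM colouring
    refine ⟨fun v => ⟨φ v % N, Nat.mod_lt _ hNpos⟩, ?_⟩
    intro h hh
    have hhV : h ⊆ V := hEV h hh
    have hmod : ∀ v ∈ h, φ v % N = φ v := fun v hv => Nat.mod_eq_of_lt (hlt v (hhV hv))
    have hQh : ∀ c : ℕ, (h.filter (fun v => c < φ v)).card + 1 ≤ t →
        (h.filter (fun v => φ v = c)).card ≤ 1 := by
      intro c
      have := hQ h hh c
      rwa [Finset.inter_eq_left.mpr hhV] at this
    set S := h.filter (fun v => (h.filter (fun u => φ v < φ u)).card < t) with hS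
    have hSh : S ⊆ h := Finset.filter_subset _ _
    have huniq : ∀ x ∈ S, ∀ y ∈ h, φ y = φ x → y = x := by
      intro x hx y hy hxy
      have hx' := Finset.mem_filter.mp hx
      have h1 := hQh (φ x) (by omega)
      exact Finset.card_le_one.mp h1 y (Finset.mem_filter.mpr ⟨hy, hxy⟩) x
        (Finset.mem_filter.mpr ⟨hx'.1, rfl⟩)
    have hdom : ∀ x ∈ S, ∀ y ∈ h, y ∉ S → φ y < φ x := by
      intro x hx y hy hyS
      by_contra hle
      push_neg at hle
      have hx' := Finset.mem_filter.mp hx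
      have hy' : t ≤ (h.filter (fun u => φ y < φ u)).card := by
        by_contra hc
        push_neg at hc
        exact hyS (Finset.mem_filter.mpr ⟨hy, hc⟩)
      have hsub : h.filter (fun u => φ y < φ u) ⊆ h.filter (fun u => φ x < φ u) := by
        intro u hu
        rw [Finset.mem_filter] at hu ⊢
        exact ⟨hu.1, lt_of_le_of_lt hle hu.2⟩
      have := Finset.card_le_card hsub
      omega
    have hSle : S.card ≤ t := by
      have : ∀ v ∈ S, (h.filter (fun u => φ v < φ u)).card ∈ Finset.range t := by
        intro v hv
        exact Finset.mem_range.mpr (Finset.mem_filter.mp hv).2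
      have hinj : Set.InjOn (fun v => (h.filter (fun u => φ v < φ u)).card) ↑S := by
        intro v hv w hw hvw
        simp only at hvw
        have hvS : v ∈ S := Finset.mem_coe.mp hv
        have hwS : w ∈ S := Finset.mem_coe.mp hw
        rcases lt_trichotomy (φ v) (φ w) with h1 | h1 | h1
        · exfalso
          have hss : h.filter (fun u => φ w < φ u) ⊂ h.filter (fun u => φ v < φ u) := by
            refine ⟨?_, ?_⟩
            · intro u hu
              rw [Finset.mem_filter] at hu ⊢
              exact ⟨hu.1, lt_trans h1 hu.2⟩
            · intro hcon
              have hwmem : w ∈ h.filter (fun u => φ v < φ u) :=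
                Finset.mem_filter.mpr ⟨hSh hwS, h1⟩
              have := hcon hwmem
              rw [Finset.mem_filter] at this
              exact lt_irrefl _ this.2
          have := Finset.card_lt_card hss
          omega
        · exact (huniq v hvS w (hSh hwS) h1.symm).symm
        · exfalso
          have hss : h.filter (fun u => φ v < φ u) ⊂ h.filter (fun u => φ w < φ u) := by
            refine ⟨?_, ?_⟩
            · intro u hu
              rw [Finset.mem_filter] at hu ⊢
              exact ⟨hu.1, lt_trans h1 hu.2⟩
            · intro hcon
              have hvmem : v ∈ h.filter (fun u => φ w < φ u) :=
                Finset.mem_filter.mpr ⟨hSh hvS, h1⟩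
              have := hcon hvmem
              rw [Finset.mem_filter] at this
              exact lt_irrefl _ this.2
          have := Finset.card_lt_card hss
          omega
      have := Finset.card_le_card_of_injOn _ this hinj
      simpa using this
    have hScard : S.card = min h.card t := by
      by_cases hdiff : h \ S = ∅
      · have hhS : h ⊆ S := Finset.sdiff_eq_empty_iff_subset.mp hdiff
        have : S = h := Finset.Subset.antisymm hSh hhS
        rw [this]
        have : h.card ≤ t := this ▸ hSle
        omega
      · obtain ⟨y, hy, hmax⟩ := Finset.exists_max_image (h \ S) φ
          (Finset.nonempty_iff_ne_empty.mpr hdiff)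
        have hy' := Finset.mem_sdiff.mp hy
        have hyt : t ≤ (h.filter (fun u => φ y < φ u)).card := by
          by_contra hc
          push_neg at hc
          exact hy'.2 (Finset.mem_filter.mpr ⟨hy'.1, hc⟩)
        have hsubS : h.filter (fun u => φ y < φ u) ⊆ S := by
          intro u hu
          simp only [Finset.mem_filter] at hu
          by_contra huS
          have : u ∈ h \ S := Finset.mem_sdiff.mpr ⟨hu.1, huS⟩
          have := hmax u this
          omega
        have h1 : t ≤ S.card := le_trans hyt (Finset.card_le_card hsubS)
        have h2 : t ≤ h.card := le_trans h1 (Finset.card_le_card hSh)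
        omega
    refine ⟨S, hSh, hScard, ?_, ?_⟩
    · intro x hx y hy hxy
      apply huniq x hx y hy
      have : φ y % N = φ x % N := congrArg Fin.val hxy
      rwa [hmod y hy, hmod x (hSh hx)] at this
    · intro x hx y hy hyS
      have := hdom x hx y hy hyS
      show (⟨φ y % N, _⟩ : Fin N) < ⟨φ x % N, _⟩
      rw [Fin.lt_def]
      simpa [hmod y hy, hmod x (hSh hx)] using this
end

section
/- Let t ≥ 1 and let H be a hypergraph that admits a t-strong-CF-colouring with k colours. Then χ^t_CF(H) ≤ k^t. (In fact, assigning to each t-element subset {v_{i₁}, …, v_{i_t}} of vertices, listed in a fixed linear order of V, the tuple of colours of its elements yields a t-subset-CF-colouring with at most k^t colours.) -/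
/-- A `t`-strong-CF-colouring: every hyperedge `h` contains at least `min |h| t` vertices
whose colours appear exactly once in `h`. -/
def IsStrongCFColouring {α β : Type*} (t : ℕ) (E : Set (Finset α)) (φ : α → β) : Prop :=
  ∀ h ∈ E, ∃ S : Finset α, S ⊆ h ∧ S.card = min h.card t ∧
    ∀ x ∈ S, ∀ y ∈ h, φ y = φ x → y = x

theorem stmt_8 {α : Type*} (t k : ℕ) (ht : 1 ≤ t) (hk : 1 ≤ k)
    (E : Set (Finset α)) (φ : α → Fin k) (hφ : IsStrongCFColouring t E φ) :
    ∃ ψ : Finset α → Fin (k ^ t), IsSubsetCFColouring t E ψ := by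
  classical
  set z : Fin k := ⟨0, hk⟩ with hz
  set L : Finset α → List (Fin k) := fun S => (S.val.map φ).sort (· ≤ ·) with hL
  have e : (Fin t → Fin k) ≃ Fin (k ^ t) := Fintype.equivFinOfCardEq (by simp)
  refine ⟨fun S => e (fun i => (L S).getD i z), ?_⟩
  intro h hh hcard
  obtain ⟨S, hSh, hScard, huniq⟩ := hφ h hh
  have hSt : S.card = t := by rw [hScard]; omega
  refine ⟨S, hSh, hSt, ?_⟩
  intro S' hS'h hS't hne heq
  have hlen : ∀ (T : Finset α), (L T).length = T.card := by
    intro T; simp [hL]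
  -- lists are equal
  have hlists : L S' = L S := by
    have hfun := e.injective heq
    apply List.ext_getElem (by rw [hlen, hlen, hSt, hS't])
    intro i h1 h2
    have hit : i < t := by rw [hlen, hS't] at h1; exact h1
    have := congrFun hfun ⟨i, hit⟩
    simpa [List.getD_eq_getElem, h1, h2] using this
  -- multisets of colours are equal
  have hmul : S'.val.map φ = S.val.map φ := by
    have h1 : ((S'.val.map φ).sort (· ≤ ·) : Multiset (Fin k)) = S'.val.map φ :=
      Multiset.sort_eq _ _
    have h2 : ((S.val.map φ).sort (· ≤ ·) : Multiset (Fin k)) = S.val.map φ :=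
      Multiset.sort_eq _ _
    rw [← h1, ← h2]
    exact congrArg _ hlists
  -- S ⊆ S'
  have hsub : S ⊆ S' := by
    intro x hx
    have hxm : φ x ∈ S.val.map φ := Multiset.mem_map_of_mem _ hx
    rw [← hmul] at hxm
    obtain ⟨y, hy, hyx⟩ := Multiset.mem_map.mp hxm
    have : y = x := huniq x hx y (hS'h hy) hyx
    rwa [← this]
  exact hne (Finset.eq_of_subset_of_card_le hsub (by rw [hSt, hS't])).symm
end

section
/- Let t ≥ 1 and let H = (V, E) be a hypergraph that admits a t-UM-colouring φ : V → {1, …, k}. Then the colouring of t-element subsets defined by S ↦ Σ_{v ∈ S} φ(v) is a t-subset-CF-colouring of H; in particular χ^t_CF(H) ≤ t · k. -/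
lemma key_max {α : Type*} [DecidableEq α] (t : ℕ) (φ : α → ℕ)
    (hrange : ∀ v, 1 ≤ φ v)
    {h S : Finset α} (hSh : S ⊆ h) (hScard : S.card = t)
    (hlt : ∀ x ∈ S, ∀ y ∈ h, y ∉ S → φ y < φ x) :
    ∀ S' ⊆ h, S'.card = t → S' ≠ S → S'.sum φ < S.sum φ := by
  intro S' hS'h hS'card hne
  have hB : (S \ S').Nonempty := by
    rw [Finset.sdiff_nonempty]
    intro hsub
    exact hne ((Finset.eq_of_subset_of_card_le hsub (by omega)).symm)
  have hcards : (S' \ S).card = (S \ S').card :=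
    Finset.card_sdiff_comm (by omega)
  obtain ⟨b₀, hb₀B, hb₀min⟩ := Finset.exists_min_image _ φ hB
  have hb₀S : b₀ ∈ S := (Finset.mem_sdiff.mp hb₀B).1
  have hμ : 1 ≤ φ b₀ := hrange b₀
  have hA : ∀ a ∈ S' \ S, φ a ≤ φ b₀ - 1 := by
    intro a ha
    rw [Finset.mem_sdiff] at ha
    have := hlt b₀ hb₀S a (hS'h ha.1) ha.2
    omega
  have hsumA : ∑ a ∈ S' \ S, φ a ≤ (S' \ S).card * (φ b₀ - 1) := by
    calc ∑ a ∈ S' \ S, φ a ≤ (S' \ S).sum (fun _ => φ b₀ - 1) :=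
          Finset.sum_le_sum hA
      _ = (S' \ S).card * (φ b₀ - 1) := by rw [Finset.sum_const, smul_eq_mul]
  have hsumB : (S \ S').card * φ b₀ ≤ ∑ a ∈ S \ S', φ a := by
    calc (S \ S').card * φ b₀ = (S \ S').sum (fun _ => φ b₀) := by
          rw [Finset.sum_const, smul_eq_mul]
      _ ≤ ∑ a ∈ S \ S', φ a := Finset.sum_le_sum (fun b hb => hb₀min b hb)
  have hmpos : 0 < (S \ S').card := Finset.card_pos.mpr hB
  have hAB : ∑ a ∈ S' \ S, φ a < ∑ a ∈ S \ S', φ a := by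
    have : (S' \ S).card * (φ b₀ - 1) < (S \ S').card * φ b₀ := by
      rw [hcards]
      exact Nat.mul_lt_mul_of_pos_left (by omega) hmpos
    omega
  have e1 : ∑ a ∈ S ∩ S', φ a + ∑ a ∈ S' \ S, φ a = ∑ a ∈ S', φ a := by
    rw [Finset.inter_comm S S']
    exact Finset.sum_inter_add_sum_sdiff S' S φ
  have e2 : ∑ a ∈ S ∩ S', φ a + ∑ a ∈ S \ S', φ a = ∑ a ∈ S, φ a :=
    Finset.sum_inter_add_sum_sdiff S S' φ
  show ∑ a ∈ S', φ a < ∑ a ∈ S, φ a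
  omega

theorem stmt_9 {α : Type*} (t k : ℕ) (ht : 1 ≤ t) (hk : 1 ≤ k)
    (E : Set (Finset α)) (φ : α → ℕ)
    (hrange : ∀ v, φ v ∈ Finset.Icc 1 k)
    (hφ : IsTUMColouring t E φ) :
    IsSubsetCFColouring t E (fun S => S.sum φ) ∧
      ∃ ψ : Finset α → Fin (t * k), IsSubsetCFColouring t E ψ := by
  classical
  have key : ∀ h ∈ E, t < h.card → ∃ S : Finset α, S ⊆ h ∧ S.card = t ∧
      ∀ S' ⊆ h, S'.card = t → S' ≠ S → S'.sum φ < S.sum φ := by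
    intro h hE hcard
    obtain ⟨S, hSh, hScard, _, hlt⟩ := hφ h hE
    have hScard' : S.card = t := by rw [hScard]; omega
    exact ⟨S, hSh, hScard',
      key_max t φ (fun v => (Finset.mem_Icc.mp (hrange v)).1) hSh hScard' hlt⟩
  have bounds : ∀ T : Finset α, T.card = t → t ≤ T.sum φ ∧ T.sum φ ≤ t * k := by
    intro T hTc
    constructor
    · calc t = T.sum (fun _ => 1) := by
            rw [Finset.sum_const, smul_eq_mul, hTc, mul_one]
        _ ≤ T.sum φ := Finset.sum_le_sum fun v _ => (Finset.mem_Icc.mp (hrange v)).1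
    · calc T.sum φ ≤ T.sum (fun _ => k) :=
            Finset.sum_le_sum fun v _ => (Finset.mem_Icc.mp (hrange v)).2
        _ = t * k := by rw [Finset.sum_const, smul_eq_mul, hTc]
  constructor
  · intro h hE hcard
    obtain ⟨S, h1, h2, h3⟩ := key h hE hcard
    exact ⟨S, h1, h2, fun S' a b c => Nat.ne_of_lt (h3 S' a b c)⟩
  · have hpos : 0 < t * k := Nat.mul_pos ht hk
    refine ⟨fun S => ⟨(S.sum φ - t) % (t * k), Nat.mod_lt _ hpos⟩, ?_⟩
    intro h hE hcard
    obtain ⟨S, h1, h2, h3⟩ := key h hE hcard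
    refine ⟨S, h1, h2, ?_⟩
    intro S' a b c
    have hS := bounds S h2
    have hS' := bounds S' b
    have hlt := h3 S' a b c
    simp only [Ne, Fin.mk.injEq]
    rw [Nat.mod_eq_of_lt (by omega), Nat.mod_eq_of_lt (by omega)]
    omega
end

section
/- For every n ≥ 1, let H^∪ be the hypergraph with vertex set {1, …, n} whose hyperedges are all unions I ∪ J of two discrete intervals I = {i, …, j} and J = {k, …, l} with 1 ≤ i ≤ j ≤ n and 1 ≤ k ≤ l ≤ n. Then χ²_CF(H^∪) ≤ 4 · ⌈log₂(n+1)⌉, i.e. there is a colouring of the 2-element subsets of {1, …, n} with at most 4⌈log₂(n+1)⌉ colours such that every hyperedge of H^∪ of size at least 3 contains a pair whose colour differs from that of every other pair in the hyperedge. -/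
/-- The hyperedges of `H^∪`: all unions of two discrete intervals
`{i,…,j} ∪ {k,…,l}` with `1 ≤ i ≤ j ≤ n` and `1 ≤ k ≤ l ≤ n`. -/
def unionIntervalEdges (n : ℕ) : Set (Finset ℕ) :=
  {e | ∃ i j k l : ℕ, 1 ≤ i ∧ i ≤ j ∧ j ≤ n ∧ 1 ≤ k ∧ k ≤ l ∧ l ≤ n ∧
    e = Finset.Icc i j ∪ Finset.Icc k l}

namespace CFaux
def nu (v : ℕ) : ℕ := v.factorization 2
lemma pow_nu_dvd (v : ℕ) : 2 ^ nu v ∣ v := Nat.ordProj_dvd v 2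
lemma nu_ge_iff {v t : ℕ} (hv : v ≠ 0) : 2 ^ t ∣ v ↔ t ≤ nu v :=
  Nat.Prime.pow_dvd_iff_le_factorization Nat.prime_two hv
lemma two_dvd_iff_nu {v : ℕ} (hv : v ≠ 0) : 2 ∣ v ↔ 1 ≤ nu v := by
  simpa using nu_ge_iff (t := 1) hv
lemma key {x y : ℕ} (hx : 0 < x) (hxy : x < y) (h : nu x = nu y) :
    ∃ z, x < z ∧ z < y ∧ nu x < nu z := by
  set t := nu x with ht
  obtain ⟨a, ha⟩ := pow_nu_dvd x
  obtain ⟨b, hb⟩ := (nu_ge_iff (by omega : y ≠ 0)).2 h.le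
  have hao : ¬ 2 ∣ a := by
    intro ⟨c, hc⟩
    have : 2 ^ (t+1) ∣ x := ⟨c, by rw [ha, hc]; ring⟩
    have := (nu_ge_iff (by omega : x ≠ 0)).1 this
    omega
  have hbo : ¬ 2 ∣ b := by
    intro ⟨c, hc⟩
    have : 2 ^ (t+1) ∣ y := ⟨c, by rw [hb, hc]; ring⟩
    have := (nu_ge_iff (by omega : y ≠ 0)).1 this
    rw [← h] at this; omega
  have hab : a < b := by
    have h2 : 0 < 2 ^ t := Nat.pow_pos (by norm_num)
    by_contra hc
    push_neg at hc
    have : y ≤ x := by rw [ha, hb]; exact Nat.mul_le_mul_left _ hc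
    omega
  have hab2 : a + 2 ≤ b := by
    rcases Nat.even_or_odd a with he | ho
    · exact absurd he.two_dvd hao
    rcases Nat.even_or_odd b with he | ho'
    · exact absurd he.two_dvd hbo
    omega
  refine ⟨2 ^ t * (a + 1), ?_, ?_, ?_⟩
  · rw [ha]; have h2 : 0 < 2 ^ t := Nat.pow_pos (by norm_num); nlinarith
  · rw [hb]; have h2 : 0 < 2 ^ t := Nat.pow_pos (by norm_num); nlinarith
  · have hz : (2:ℕ) ^ (t+1) ∣ 2 ^ t * (a + 1) := by
      obtain ⟨c, hc⟩ : 2 ∣ a + 1 := by omega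
      exact ⟨c, by rw [hc]; ring⟩
    have hz0 : 2 ^ t * (a+1) ≠ 0 := by positivity
    have := (nu_ge_iff hz0).1 hz
    omega

lemma exists_argmax {a b : ℕ} (ha : 1 ≤ a) (hab : a ≤ b) :
    ∃ m ∈ Finset.Icc a b, ∀ x ∈ Finset.Icc a b, x ≠ m → nu x < nu m := by
  obtain ⟨m, hm, hmax⟩ := Finset.exists_max_image (Finset.Icc a b) nu ⟨a, by simp [hab]⟩
  refine ⟨m, hm, fun x hx hne => ?_⟩
  rcases lt_or_eq_of_le (hmax x hx) with h | h
  · exact h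
  exfalso
  simp only [Finset.mem_Icc] at hx hm
  rcases Nat.lt_or_ge x m with hlt | hge
  · obtain ⟨z, h1, h2, h3⟩ := key (by omega : 0 < x) hlt h
    have := hmax z (by simp only [Finset.mem_Icc]; omega)
    omega
  · have hlt : m < x := by omega
    obtain ⟨z, h1, h2, h3⟩ := key (by omega : 0 < m) hlt h.symm
    have := hmax z (by simp only [Finset.mem_Icc]; omega)
    omega


def raw (L x y : ℕ) : ℕ :=
  if y = x + 1 then (if 2 ∣ x then nu x else L + nu y) else 2 * L + nu x + nu y

lemma argmax_even {a b m : ℕ} (ha : 1 ≤ a) (hab : a < b) (hm : m ∈ Finset.Icc a b)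
    (hmax : ∀ x ∈ Finset.Icc a b, x ≠ m → nu x < nu m) : 2 ∣ m := by
  have he : ∃ e ∈ Finset.Icc a b, 2 ∣ e := by
    by_cases h : 2 ∣ a
    · exact ⟨a, by simp [Finset.mem_Icc]; omega, h⟩
    · exact ⟨a + 1, by simp [Finset.mem_Icc]; omega, by omega⟩
  obtain ⟨e, he1, he2⟩ := he
  simp only [Finset.mem_Icc] at hm he1
  have he0 : e ≠ 0 := by omega
  have h1 : 1 ≤ nu e := (two_dvd_iff_nu he0).1 he2
  have h2 : 1 ≤ nu m := by
    rcases eq_or_ne e m with rfl | hne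
    · exact h1
    · have := hmax e (by simp [Finset.mem_Icc]; omega) hne
      omega
  exact (two_dvd_iff_nu (by omega)).2 h2

lemma interval_core {L a b : ℕ} (hL : 0 < L) (ha : 1 ≤ a) (hab : a + 2 ≤ b)
    (hnu : ∀ v ∈ Finset.Icc a b, nu v < L) :
    ∃ x ∈ Finset.Icc a b, ∃ y ∈ Finset.Icc a b, x < y ∧
      ∀ x' ∈ Finset.Icc a b, ∀ y' ∈ Finset.Icc a b, x' < y' → ¬(x' = x ∧ y' = y) →
        raw L x' y' ≠ raw L x y := by
  obtain ⟨m, hm, hmax⟩ := exists_argmax ha (by omega : a ≤ b)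
  have hmeven : 2 ∣ m := argmax_even ha (by omega) hm hmax
  have hm' := Finset.mem_Icc.1 hm
  by_cases hmb : m < b
  · -- S = (m, m+1)
    refine ⟨m, hm, m + 1, by simp [Finset.mem_Icc]; omega, by omega, ?_⟩
    intro x' hx' y' hy' hlt hne heq
    have hSraw : raw L m (m + 1) = nu m := by simp [raw, hmeven]
    rw [hSraw] at heq
    have hnum : nu m < L := hnu m hm
    unfold raw at heq
    split_ifs at heq with h1 h2
    · -- adjacent, even x' : nu x' = nu m
      have : x' = m := by
        by_contra hc
        have := hmax x' hx' hc
        omega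
      omega
    · -- adjacent, odd x' : L + nu y' = nu m, impossible
      omega
    · -- nonadjacent : impossible
      have := hnu x' hx'
      have := hnu y' hy'
      omega
  · -- m = b, S = (m-1, m)
    have hmb' : m = b := by omega
    refine ⟨m - 1, by simp [Finset.mem_Icc]; omega, m, hm, by omega, ?_⟩
    intro x' hx' y' hy' hlt hne heq
    have hodd : ¬ 2 ∣ (m - 1) := by omega
    have hSraw : raw L (m - 1) m = L + nu m := by
      have : m = m - 1 + 1 := by omega
      simp [raw, ← this, hodd]
    rw [hSraw] at heq
    have hnum : nu m < L := hnu m hm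
    unfold raw at heq
    split_ifs at heq with h1 h2
    · have := hnu x' hx'; omega
    · -- L + nu y' = L + nu m
      have hy'm : y' = m := by
        by_contra hc
        have := hmax y' hy' hc
        omega
      omega
    · have := hnu x' hx'; have := hnu y' hy'; omega

lemma disjoint_core {L a b c d : ℕ} (hL : 0 < L) (ha : 1 ≤ a) (hab : a ≤ b)
    (hbc : b + 2 ≤ c) (hcd : c ≤ d)
    (hnu : ∀ v ∈ Finset.Icc a b ∪ Finset.Icc c d, nu v < L) :
    ∃ x ∈ Finset.Icc a b ∪ Finset.Icc c d, ∃ y ∈ Finset.Icc a b ∪ Finset.Icc c d, x < y ∧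
      ∀ x' ∈ Finset.Icc a b ∪ Finset.Icc c d, ∀ y' ∈ Finset.Icc a b ∪ Finset.Icc c d,
        x' < y' → ¬(x' = x ∧ y' = y) → raw L x' y' ≠ raw L x y := by
  obtain ⟨mL, hmL, hmaxL⟩ := exists_argmax ha hab
  obtain ⟨mR, hmR, hmaxR⟩ := exists_argmax (by omega : 1 ≤ c) hcd
  have hmL' := Finset.mem_Icc.1 hmL
  have hmR' := Finset.mem_Icc.1 hmR
  have hnuL : ∀ v ∈ Finset.Icc a b, nu v < L := fun v hv =>
    hnu v (Finset.mem_union_left _ hv)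
  have hnuR : ∀ v ∈ Finset.Icc c d, nu v < L := fun v hv =>
    hnu v (Finset.mem_union_right _ hv)
  by_cases hC1 : ∃ x ∈ Finset.Icc a b, x ≠ mL ∧ nu mR ≤ nu x
  · -- left interval has a second element with nu ≥ nu mR; use adjacent pair at mL
    obtain ⟨w, hw, hwne, hwnu⟩ := hC1
    have hw' := Finset.mem_Icc.1 hw
    have haltb : a < b := by
      rcases Nat.lt_or_ge a b with h | h
      · exact h
      · exfalso; have : w = mL := by omega
        exact hwne this
    have hRL : nu mR < nu mL := lt_of_le_of_lt hwnu (hmaxL w hw hwne)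
    have hmeven : 2 ∣ mL := argmax_even ha haltb hmL hmaxL
    have key : ∀ x' ∈ Finset.Icc a b ∪ Finset.Icc c d, nu x' = nu mL → x' = mL := by
      intro x' hx' hx'nu
      rcases Finset.mem_union.1 hx' with h | h
      · by_contra hc; have := hmaxL x' h hc; omega
      · exfalso
        rcases eq_or_ne x' mR with rfl | hne
        · omega
        · have := hmaxR x' h hne; omega
    by_cases hmb : mL < b
    · refine ⟨mL, Finset.mem_union_left _ hmL, mL + 1,
        Finset.mem_union_left _ (by simp [Finset.mem_Icc]; omega), by omega, ?_⟩
      intro x' hx' y' hy' hlt hne heq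
      have hSraw : raw L mL (mL + 1) = nu mL := by simp [raw, hmeven]
      rw [hSraw] at heq
      have hnum : nu mL < L := hnuL mL hmL
      unfold raw at heq
      split_ifs at heq with h1 h2
      · have := key x' hx' heq; omega
      · omega
      · have := hnu x' hx'; have := hnu y' hy'; omega
    · have hmb' : mL = b := by omega
      refine ⟨mL - 1, Finset.mem_union_left _ (by simp [Finset.mem_Icc]; omega), mL,
        Finset.mem_union_left _ hmL, by omega, ?_⟩
      intro x' hx' y' hy' hlt hne heq
      have hodd : ¬ 2 ∣ (mL - 1) := by omega
      have hSraw : raw L (mL - 1) mL = L + nu mL := by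
        have h' : mL = mL - 1 + 1 := by omega
        simp [raw, ← h', hodd]
      rw [hSraw] at heq
      have hnum : nu mL < L := hnuL mL hmL
      unfold raw at heq
      split_ifs at heq with h1 h2
      · have := hnu x' hx'; omega
      · have hy'm : y' = mL := key y' hy' (by omega)
        omega
      · have := hnu x' hx'; have := hnu y' hy'; omega
  · by_cases hC2 : ∃ y ∈ Finset.Icc c d, y ≠ mR ∧ nu mL ≤ nu y
    · obtain ⟨w, hw, hwne, hwnu⟩ := hC2
      have hw' := Finset.mem_Icc.1 hw
      have hcltd : c < d := by
        rcases Nat.lt_or_ge c d with h | h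
        · exact h
        · exfalso; have : w = mR := by omega
          exact hwne this
      have hLR : nu mL < nu mR := lt_of_le_of_lt hwnu (hmaxR w hw hwne)
      have hmeven : 2 ∣ mR := argmax_even (by omega) hcltd hmR hmaxR
      have key : ∀ x' ∈ Finset.Icc a b ∪ Finset.Icc c d, nu x' = nu mR → x' = mR := by
        intro x' hx' hx'nu
        rcases Finset.mem_union.1 hx' with h | h
        · exfalso
          rcases eq_or_ne x' mL with rfl | hne
          · omega
          · have := hmaxL x' h hne; omega
        · by_contra hc; have := hmaxR x' h hc; omega
      by_cases hmb : mR < d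
      · refine ⟨mR, Finset.mem_union_right _ hmR, mR + 1,
          Finset.mem_union_right _ (by simp [Finset.mem_Icc]; omega), by omega, ?_⟩
        intro x' hx' y' hy' hlt hne heq
        have hSraw : raw L mR (mR + 1) = nu mR := by simp [raw, hmeven]
        rw [hSraw] at heq
        have hnum : nu mR < L := hnuR mR hmR
        unfold raw at heq
        split_ifs at heq with h1 h2
        · have := key x' hx' heq; omega
        · omega
        · have := hnu x' hx'; have := hnu y' hy'; omega
      · have hmb' : mR = d := by omega
        refine ⟨mR - 1, Finset.mem_union_right _ (by simp [Finset.mem_Icc]; omega), mR,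
          Finset.mem_union_right _ hmR, by omega, ?_⟩
        intro x' hx' y' hy' hlt hne heq
        have hodd : ¬ 2 ∣ (mR - 1) := by omega
        have hSraw : raw L (mR - 1) mR = L + nu mR := by
          have h' : mR = mR - 1 + 1 := by omega
          simp [raw, ← h', hodd]
        rw [hSraw] at heq
        have hnum : nu mR < L := hnuR mR hmR
        unfold raw at heq
        split_ifs at heq with h1 h2
        · have := hnu x' hx'; omega
        · have hy'm : y' = mR := key y' hy' (by omega)
          omega
        · have := hnu x' hx'; have := hnu y' hy'; omega
    · -- non-adjacent pair (mL, mR)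
      push_neg at hC1 hC2
      refine ⟨mL, Finset.mem_union_left _ hmL, mR, Finset.mem_union_right _ hmR,
        by omega, ?_⟩
      intro x' hx' y' hy' hlt hne heq
      have hSraw : raw L mL mR = 2 * L + nu mL + nu mR := by
        have : ¬ (mR = mL + 1) := by omega
        simp [raw, this]
      rw [hSraw] at heq
      have hnumL : nu mL < L := hnuL mL hmL
      have hnumR : nu mR < L := hnuR mR hmR
      unfold raw at heq
      split_ifs at heq with h1 h2
      · have := hnu x' hx'; omega
      · have := hnu y' hy'; omega
      · -- nu x' + nu y' = nu mL + nu mR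
        rcases Finset.mem_union.1 hx' with hx1 | hx1 <;>
          rcases Finset.mem_union.1 hy' with hy1 | hy1
        · -- both in left
          have hx2 := Finset.mem_Icc.1 hx1
          have hy2 := Finset.mem_Icc.1 hy1
          rcases eq_or_ne x' mL with hxe | hxne
          · have h3 : y' ≠ mL := by omega
            have := hmaxL y' hy1 h3
            have := hC1 y' hy1 h3
            have h5 : nu x' = nu mL := by rw [hxe]
            omega
          · have h3 := hmaxL x' hx1 hxne
            have h4 := hC1 x' hx1 hxne
            rcases eq_or_ne y' mL with hye | hyne
            · have h5 : nu y' = nu mL := by rw [hye]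
              omega
            · have := hmaxL y' hy1 hyne; have := hC1 y' hy1 hyne; omega
        · -- cross pair
          have h3 : nu x' ≤ nu mL := by
            rcases eq_or_ne x' mL with hxe | hne2
            · rw [hxe]
            · exact (hmaxL x' hx1 hne2).le
          have h4 : nu y' ≤ nu mR := by
            rcases eq_or_ne y' mR with hye | hne2
            · rw [hye]
            · exact (hmaxR y' hy1 hne2).le
          have hxx : x' = mL := by
            by_contra hc; have := hmaxL x' hx1 hc; omega
          have hyy : y' = mR := by
            by_contra hc; have := hmaxR y' hy1 hc; omega
          exact hne ⟨hxx, hyy⟩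
        · -- x' in right, y' in left : impossible
          have hx2 := Finset.mem_Icc.1 hx1
          have hy2 := Finset.mem_Icc.1 hy1
          omega
        · -- both in right
          have hx2 := Finset.mem_Icc.1 hx1
          have hy2 := Finset.mem_Icc.1 hy1
          rcases eq_or_ne y' mR with hye | hyne
          · have h3 : x' ≠ mR := by omega
            have := hmaxR x' hx1 h3
            have := hC2 x' hx1 h3
            have h5 : nu y' = nu mR := by rw [hye]
            omega
          · have h3 := hmaxR y' hy1 hyne
            have h4 := hC2 y' hy1 hyne
            rcases eq_or_ne x' mR with hxe | hxne
            · have h5 : nu x' = nu mR := by rw [hxe]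
              omega
            · have := hmaxR x' hx1 hxne; have := hC2 x' hx1 hxne; omega


lemma raw_lt {L x y : ℕ} (hL : 0 < L) (hx : nu x < L) (hy : nu y < L) :
    raw L x y < 4 * L := by
  unfold raw; split_ifs <;> omega

def colour (L : ℕ) (S : Finset ℕ) : ℕ :=
  if h : S.Nonempty then raw L (S.min' h) (S.max' h) else 0

lemma colour_pair {L x y : ℕ} (hxy : x < y) : colour L {x, y} = raw L x y := by
  have hne : ({x, y} : Finset ℕ).Nonempty := ⟨x, by simp⟩
  have hmin : ({x, y} : Finset ℕ).min' hne = x := by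
    refine le_antisymm (Finset.min'_le _ x (by simp)) (Finset.le_min' _ _ _ fun z hz => ?_)
    simp only [Finset.mem_insert, Finset.mem_singleton] at hz
    omega
  have hmax : ({x, y} : Finset ℕ).max' hne = y := by
    refine le_antisymm (Finset.max'_le _ _ _ fun z hz => ?_) (Finset.le_max' _ y (by simp))
    simp only [Finset.mem_insert, Finset.mem_singleton] at hz
    omega
  simp [colour, hne, hmin, hmax]

lemma nu_lt_clog {n v : ℕ} (h1 : 1 ≤ v) (h2 : v ≤ n) : nu v < Nat.clog 2 (n + 1) := by
  by_contra hc
  push_neg at hc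
  have hd : 2 ^ nu v ≤ v := Nat.le_of_dvd (by omega) (pow_nu_dvd v)
  have h3 : n + 1 ≤ 2 ^ Nat.clog 2 (n + 1) := Nat.le_pow_clog one_lt_two _
  have h4 : 2 ^ Nat.clog 2 (n + 1) ≤ 2 ^ nu v := Nat.pow_le_pow_right (by norm_num) hc
  omega

lemma union_core {L i j k l : ℕ} (hL : 0 < L) (h1 : 1 ≤ i) (h2 : i ≤ j) (h4 : 1 ≤ k)
    (h5 : k ≤ l) (hik : i ≤ k)
    (hcard : 2 < (Finset.Icc i j ∪ Finset.Icc k l).card)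
    (hnu : ∀ v ∈ Finset.Icc i j ∪ Finset.Icc k l, nu v < L) :
    ∃ x ∈ Finset.Icc i j ∪ Finset.Icc k l, ∃ y ∈ Finset.Icc i j ∪ Finset.Icc k l, x < y ∧
      ∀ x' ∈ Finset.Icc i j ∪ Finset.Icc k l, ∀ y' ∈ Finset.Icc i j ∪ Finset.Icc k l,
        x' < y' → ¬(x' = x ∧ y' = y) → raw L x' y' ≠ raw L x y := by
  by_cases hkj : k ≤ j + 1
  · have hset : Finset.Icc i j ∪ Finset.Icc k l = Finset.Icc i (max j l) := by
      ext v
      simp only [Finset.mem_union, Finset.mem_Icc]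
      omega
    rw [hset] at hcard hnu ⊢
    have hle : i + 2 ≤ max j l := by
      rw [Nat.card_Icc] at hcard; omega
    exact interval_core hL h1 hle hnu
  · exact disjoint_core hL h1 h2 (by omega) h5 hnu

lemma to_CF {L : ℕ} (hL : 0 < L) {h : Finset ℕ}
    (hnu : ∀ v ∈ h, nu v < L)
    (core : ∃ x ∈ h, ∃ y ∈ h, x < y ∧ ∀ x' ∈ h, ∀ y' ∈ h, x' < y' →
      ¬(x' = x ∧ y' = y) → raw L x' y' ≠ raw L x y) :
    ∃ S ⊆ h, S.card = 2 ∧ ∀ S' ⊆ h, S'.card = 2 → S' ≠ S →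
      colour L S' % (4 * L) ≠ colour L S % (4 * L) := by
  obtain ⟨x, hx, y, hy, hxy, huniq⟩ := core
  have hmain : ∀ u v : ℕ, u < v → u ∈ h → v ∈ h → ({u, v} : Finset ℕ) ≠ {x, y} →
      colour L {u, v} % (4 * L) ≠ colour L {x, y} % (4 * L) := by
    intro u v huv hu hv hne
    rw [colour_pair huv, colour_pair hxy,
      Nat.mod_eq_of_lt (raw_lt hL (hnu u hu) (hnu v hv)),
      Nat.mod_eq_of_lt (raw_lt hL (hnu x hx) (hnu y hy))]
    refine huniq u hu v hv huv ?_
    rintro ⟨rfl, rfl⟩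
    exact hne rfl
  refine ⟨{x, y}, ?_, Finset.card_pair (by omega), ?_⟩
  · exact Finset.insert_subset hx (Finset.singleton_subset_iff.2 hy)
  · intro S' hS' hS2 hSne
    obtain ⟨u, v, huv, rfl⟩ := Finset.card_eq_two.1 hS2
    have hu : u ∈ h := hS' (by simp)
    have hv : v ∈ h := hS' (by simp)
    rcases Nat.lt_or_ge u v with hlt | hge
    · exact hmain u v hlt hu hv hSne
    · have hlt : v < u := by omega
      rw [Finset.pair_comm u v] at hSne ⊢
      exact hmain v u hlt hv hu hSne

end CFaux

theorem stmt_15 (n : ℕ) (hn : 1 ≤ n) :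
    ∃ φ : Finset ℕ → Fin (4 * Nat.clog 2 (n + 1)),
      IsSubsetCFColouring 2 (unionIntervalEdges n) φ := by
  have hL : 0 < Nat.clog 2 (n + 1) := Nat.clog_pos one_lt_two (by omega)
  refine ⟨fun S => ⟨CFaux.colour (Nat.clog 2 (n + 1)) S % (4 * Nat.clog 2 (n + 1)),
    Nat.mod_lt _ (by omega)⟩, ?_⟩
  intro h hmem hcard
  obtain ⟨i, j, k, l, h1, h2, h3, h4, h5, h6, rfl⟩ := hmem
  have hnu : ∀ v ∈ Finset.Icc i j ∪ Finset.Icc k l,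
      CFaux.nu v < Nat.clog 2 (n + 1) := by
    intro v hv
    rcases Finset.mem_union.1 hv with hv | hv <;>
      · have := Finset.mem_Icc.1 hv
        exact CFaux.nu_lt_clog (by omega) (by omega)
  rcases le_total i k with hik | hki
  · have core := CFaux.union_core hL h1 h2 h4 h5 hik hcard hnu
    obtain ⟨S, hS1, hS2, hS3⟩ := CFaux.to_CF hL hnu core
    exact ⟨S, hS1, hS2, fun S' hc1 hc2 hc3 e =>
      hS3 S' hc1 hc2 hc3 (congrArg Fin.val e)⟩
  · have hcomm : Finset.Icc i j ∪ Finset.Icc k l = Finset.Icc k l ∪ Finset.Icc i j :=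
      Finset.union_comm _ _
    rw [hcomm] at hcard hnu ⊢
    have core := CFaux.union_core hL h4 h5 h1 h2 hki hcard hnu
    obtain ⟨S, hS1, hS2, hS3⟩ := CFaux.to_CF hL hnu core
    exact ⟨S, hS1, hS2, fun S' hc1 hc2 hc3 e =>
      hS3 S' hc1 hc2 hc3 (congrArg Fin.val e)⟩
end

section
/- For n ≥ 2, let H' be the hypergraph with vertex set {1, …, n} whose hyperedges are all unions I ∪ J of two discrete intervals I, J ⊆ {1, …, n} with |I ∪ J| ≥ 3. Then every CF-colouring of H' uses at least √(n−1) colours; equivalently, χ_CF(H')² ≥ n − 1. -/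
/-- The hyperedges of `H'`: all unions of two discrete intervals inside `{1,…,n}`
having at least 3 elements. -/
def unionIntervalEdges3 (n : ℕ) : Set (Finset ℕ) :=
  {e | 3 ≤ e.card ∧ ∃ i j k l : ℕ, 1 ≤ i ∧ i ≤ j ∧ j ≤ n ∧ 1 ≤ k ∧ k ≤ l ∧ l ≤ n ∧
    e = Finset.Icc i j ∪ Finset.Icc k l}

theorem stmt_16 (n : ℕ) (hn : 2 ≤ n) (k : ℕ) (φ : ℕ → Fin k)
    (hφ : IsCFColouring (unionIntervalEdges3 n) φ) :
    n - 1 ≤ k * k := by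
  classical
  have key : ∀ a b : ℕ, a ∈ Finset.Icc 1 (n-1) → b ∈ Finset.Icc 1 (n-1) → a < b →
      (φ a, φ (a+1)) ≠ (φ b, φ (b+1)) := by
    intro a b ha hb hlt hab
    simp only [Finset.mem_Icc] at ha hb
    have hab1 : φ a = φ b := congrArg Prod.fst hab
    have hab2 : φ (a+1) = φ (b+1) := congrArg Prod.snd hab
    set e := Finset.Icc a (a+1) ∪ Finset.Icc b (b+1) with he
    have hmem : ∀ x, x ∈ e ↔ x = a ∨ x = a+1 ∨ x = b ∨ x = b+1 := by
      intro x
      simp only [he, Finset.mem_union, Finset.mem_Icc]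
      omega
    have hcard3 : ({a, a+1, b+1} : Finset ℕ).card = 3 := by
      rw [Finset.card_insert_of_notMem (by simp; omega),
        Finset.card_insert_of_notMem (by simp; omega), Finset.card_singleton]
    have hedge : e ∈ unionIntervalEdges3 n := by
      refine ⟨?_, a, a+1, b, b+1, by omega, by omega, by omega, by omega, by omega,
        by omega, rfl⟩
      calc 3 = ({a, a+1, b+1} : Finset ℕ).card := hcard3.symm
        _ ≤ e.card := by
          apply Finset.card_le_card
          intro x hx
          rw [hmem]
          simp only [Finset.mem_insert, Finset.mem_singleton] at hx
          omega
    obtain ⟨x, hx, hux⟩ := hφ e hedge ⟨a, (hmem a).2 (Or.inl rfl)⟩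
    rw [hmem] at hx
    rcases hx with rfl|rfl|rfl|rfl
    · exact hux b ((hmem b).2 (by omega)) (by omega) hab1.symm
    · exact hux (b+1) ((hmem _).2 (by omega)) (by omega) hab2.symm
    · exact hux a ((hmem a).2 (by omega)) (by omega) hab1
    · exact hux (a+1) ((hmem _).2 (by omega)) (by omega) hab2
  have hinj : Set.InjOn (fun t => (φ t, φ (t+1))) (Finset.Icc 1 (n-1)) := by
    intro a ha b hb hab
    simp only [Finset.mem_coe] at ha hb
    rcases Nat.lt_trichotomy a b with hlt | heq | hlt
    · exact absurd hab (key a b ha hb hlt)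
    · exact heq
    · exact absurd hab.symm (key b a hb ha hlt)
  have h1 : (Finset.Icc 1 (n-1)).card ≤ (Finset.univ : Finset (Fin k × Fin k)).card :=
    Finset.card_le_card_of_injOn _ (fun _ _ => Finset.mem_univ _) hinj
  simpa [Nat.card_Icc] using h1
end
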